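/- Let (R, 𝔪, k) be a Noetherian local ring of prime characteristic p containing a perfect coefficient field k, and let M be an Artinian R-module with a Frobenius action F. If F acts injectively on M, then M_s ⊆ Soc(M). -/

import Mathlib

/-- The socle of a module `M` over a local ring `R`:
the set of elements killed by the maximal ideal. -/
def Socle (R M : Type*) [CommRing R] [IsLocalRing R] [AddCommGroup M] [Module R M] : Set M :=
  {x : M | ∀ r ∈ IsLocalRing.maximalIdeal R, r • x = 0}

/-- The `K`-span of a subset `S` of an `R`-module `M`, where `K` acts on `M` through a ring
homomorphism `ι : K →+* R` (e.g. the inclusion of a coefficient field): the set of finite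
`K`-linear combinations of elements of `S`. -/
def kSpan {K R M : Type*} [Field K] [CommRing R] [AddCommGroup M] [Module R M]
    (ι : K →+* R) (S : Set M) : Set M :=
  {m : M | ∃ (n : ℕ) (c : Fin n → K) (s : Fin n → M),
    (∀ i, s i ∈ S) ∧ m = ∑ i, ι (c i) • s i}

/-- The Hartshorne–Speiser stable part of a module `M` with Frobenius action `F`, relative to a
coefficient field `ι : K →+* R`: the intersection over `j ≥ 1` of the `K`-spans of the images
`F^j(M)`. -/
def stablePart {K R M : Type*} [Field K] [CommRing R] [AddCommGroup M] [Module R M]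
    (ι : K →+* R) (F : M → M) : Set M :=
  ⋂ j ∈ {j : ℕ | 1 ≤ j}, kSpan ι (Set.range F^[j])

private lemma antitone_stabilizes {R M : Type*} [Ring R] [AddCommGroup M] [Module R M]
    [IsArtinian R M] (f : ℕ → Submodule R M) (hf : Antitone f) :
    ∃ n, ∀ m, n ≤ m → f n = f m := by
  obtain ⟨n, hn⟩ := IsArtinian.monotone_stabilizes (R := R) (M := M)
    ⟨fun i => OrderDual.toDual (f i), fun a b h => hf h⟩
  exact ⟨n, fun m hm => hn m hm⟩

/-- **Hartshorne–Speiser.** Let `(R, 𝔪, k)` be a Noetherian local ring of prime characteristic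
`p` containing a *perfect* coefficient field `k` (given by `ι : k →+* R` inducing an
isomorphism onto the residue field), and let `M` be an Artinian `R`-module with a Frobenius
action `F`.  If `F` acts injectively on `M`, then `M_s ⊆ Soc(M)`. -/
theorem stablePart_subset_socle_of_perfect
    {K R M : Type*} [Field K] [PerfectField K] [CommRing R] [IsLocalRing R] [IsNoetherianRing R]
    (p : ℕ) [Fact p.Prime] [CharP R p]
    (ι : K →+* R) (hcoeff : Function.Bijective ((IsLocalRing.residue R).comp ι))
    [AddCommGroup M] [Module R M] [IsArtinian R M]
    (F : M → M)
    (hadd : ∀ x y : M, F (x + y) = F x + F y)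
    (hsmul : ∀ (r : R) (m : M), F (r • m) = r ^ p • F m)
    (hinj : Function.Injective F) :
    stablePart ι F ⊆ Socle R M := by
  haveI : CharP K p := RingHom.charP ι ι.injective p
  haveI : ExpChar K p := ExpChar.prime Fact.out
  -- basic facts about iterates of F
  have hF0 : F 0 = 0 := by
    have h := hadd 0 0
    rw [add_zero] at h
    exact (left_eq_add.mp h)
  have hFj0 : ∀ j : ℕ, F^[j] (0 : M) = 0 := by
    intro j
    induction j with
    | zero => rfl
    | succ j ih => rw [Function.iterate_succ_apply, hF0, ih]
  have hFjadd : ∀ (j : ℕ) (a b : M), F^[j] (a + b) = F^[j] a + F^[j] b := by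
    intro j
    induction j with
    | zero => intro a b; rfl
    | succ j ih =>
      intro a b
      simp only [Function.iterate_succ_apply]
      rw [hadd, ih]
  have hFjsmul : ∀ (j : ℕ) (r : R) (m : M), F^[j] (r • m) = r ^ p ^ j • F^[j] m := by
    intro j
    induction j with
    | zero => intro r m; simp
    | succ j ih =>
      intro r m
      simp only [Function.iterate_succ_apply]
      rw [hsmul, ih, ← pow_mul, ← pow_succ']
  have hinjj : ∀ j : ℕ, Function.Injective F^[j] := fun j => hinj.iterate j
  -- p-th power roots in K
  have hroot : ∀ (j : ℕ) (c : K), ∃ d : K, d ^ p ^ j = c := by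
    intro j
    induction j with
    | zero => intro c; exact ⟨c, by simp⟩
    | succ j ih =>
      intro c
      obtain ⟨d, hd⟩ := ih c
      obtain ⟨e, he⟩ := surjective_frobenius K p d
      refine ⟨e, ?_⟩
      have hep : e ^ p = d := he
      rw [pow_succ', pow_mul, hep, hd]
  intro x hx
  -- x is in the image of every iterate of F
  simp only [stablePart, Set.mem_iInter, Set.mem_setOf_eq] at hx
  have hrange : ∀ j : ℕ, x ∈ Set.range F^[j] := by
    intro j
    rcases Nat.eq_zero_or_pos j with hj | hj
    · subst hj; exact ⟨x, rfl⟩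
    obtain ⟨n, c, s, hs, hsum⟩ := hx j hj
    choose m hm using fun i => hs i
    choose d hd using fun i => hroot j (c i)
    refine ⟨∑ i, ι (d i) • m i, ?_⟩
    have : F^[j] (∑ i, ι (d i) • m i) = ∑ i, F^[j] (ι (d i) • m i) :=
      map_sum (AddMonoidHom.mk' F^[j] (hFjadd j)) _ _
    rw [this, hsum]
    refine Finset.sum_congr rfl fun i _ => ?_
    rw [hFjsmul j, ← map_pow, hd, hm]
  choose y hy using hrange
  -- compatibility of the preimage chain
  have hcompat : ∀ i j : ℕ, F^[i] (y (i + j)) = y j := by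
    intro i j
    apply hinjj j
    rw [← Function.iterate_add_apply, add_comm j i, hy, hy]
  -- now show x is killed by every r in the maximal ideal
  show ∀ r ∈ IsLocalRing.maximalIdeal R, r • x = 0
  intro r hr
  -- step 1: some power of r kills x
  have hpow : ∃ n : ℕ, r ^ n • x = 0 := by
    obtain ⟨n, hn⟩ := antitone_stabilizes (R := R) (M := M)
      (fun i => Submodule.span R {r ^ i • x})
      (antitone_nat_of_succ_le fun i => by
        rw [Submodule.span_le, Set.singleton_subset_iff]
        have : r ^ (i + 1) • x = r • (r ^ i • x) := by rw [← mul_smul, ← pow_succ']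
        rw [this]
        exact Submodule.smul_mem _ r (Submodule.mem_span_singleton_self _))
    have hmem : r ^ n • x ∈ Submodule.span R {r ^ (n + 1) • x} := by
      rw [← hn (n + 1) (Nat.le_succ n)]
      exact Submodule.mem_span_singleton_self _
    obtain ⟨a, ha⟩ := Submodule.mem_span_singleton.mp hmem
    have h1 : (a * r) • (r ^ n • x) = a • (r ^ (n + 1) • x) := by
      rw [smul_smul, smul_smul, pow_succ']
      ring_nf
    have hkey : (1 - a * r) • (r ^ n • x) = 0 := by
      rw [sub_smul, one_smul, h1, ha, sub_self]
    have hu : IsUnit (1 - a * r) :=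
      IsLocalRing.isUnit_one_sub_self_of_mem_nonunits _
        ((IsLocalRing.mem_maximalIdeal _).mp (Ideal.mul_mem_left _ a hr))
    obtain ⟨u, hu⟩ := hu
    refine ⟨n, ?_⟩
    have : ((u⁻¹ : Rˣ) : R) • ((1 - a * r) • (r ^ n • x)) = r ^ n • x := by
      rw [← mul_smul, ← hu, Units.inv_mul, one_smul]
    rw [← this, hkey, smul_zero]
  obtain ⟨n, hn⟩ := hpow
  -- step 2: r kills y j for j large
  have hkill : ∀ j : ℕ, n ≤ p ^ j → r • y j = 0 := by
    intro j hj
    apply hinjj j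
    rw [hFjsmul j, hFj0 j, hy j]
    have : r ^ p ^ j = r ^ (p ^ j - n) * r ^ n := by
      rw [← pow_add]
      congr 1
      omega
    rw [this, mul_smul, hn, smul_zero]
  -- step 3: stabilize the chain of spans of tails of y
  obtain ⟨N₁, hN₁⟩ := antitone_stabilizes (R := R) (M := M)
    (fun i => Submodule.span R {m | ∃ j, i ≤ j ∧ y j = m})
    (fun a b hab => Submodule.span_mono fun m ⟨j, hj, e⟩ => ⟨j, hab.trans hj, e⟩)
  set N := max N₁ n with hN
  have hNn : n ≤ N := le_max_right _ _
  have hmemW : y N ∈ Submodule.span R {m | ∃ j, 2 * N ≤ j ∧ y j = m} := by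
    have h1 : Submodule.span R {m | ∃ j, N₁ ≤ j ∧ y j = m} =
        Submodule.span R {m | ∃ j, N ≤ j ∧ y j = m} := hN₁ N (le_max_left _ _)
    have hN₁N : N₁ ≤ N := le_max_left _ _
    have h2 : Submodule.span R {m | ∃ j, N₁ ≤ j ∧ y j = m} =
        Submodule.span R {m | ∃ j, 2 * N ≤ j ∧ y j = m} :=
      hN₁ (2 * N) (hN₁N.trans (by omega))
    rw [← h2, h1]
    exact Submodule.subset_span ⟨N, le_refl N, rfl⟩
  -- step 4: push F^[N] through the span
  have hfinal : r • F^[N] (y N) = 0 := by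
    refine Submodule.span_induction (p := fun z _ => r • F^[N] z = 0) ?_ ?_ ?_ ?_ hmemW
    · rintro z ⟨j, hj, rfl⟩
      show r • F^[N] (y j) = 0
      have hcj : F^[N] (y j) = y (j - N) := by
        have := hcompat N (j - N)
        rwa [show N + (j - N) = j by omega] at this
      rw [hcj]
      apply hkill
      have h3 : j - N < p ^ (j - N) := Nat.lt_pow_self (n := j - N) (Fact.out : p.Prime).one_lt
      omega
    · show r • F^[N] (0 : M) = 0
      rw [hFj0, smul_zero]
    · intro a b _ _ hxa hxb
      show r • F^[N] (a + b) = 0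
      rw [hFjadd, smul_add, hxa, hxb, add_zero]
    · intro a z _ hz
      show r • F^[N] (a • z) = 0
      rw [hFjsmul, smul_comm, hz, smul_zero]
  rwa [hy N] at hfinal
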